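/- Fix m ∈ ℕ, let n = m(m+1)/2, define c_0,...,c_n by Π_{i=1}^m(1-X^i) = Σ_i c_i X^i, and set d_j = Σ_{i=0}^{n-j} c_i. Then for every non-empty subset S of {1,...,m}: Σ_{j=1}^n d_j · r(j,S) equals 1 if S = {1,...,m}, and 0 otherwise, where r(j,S) is the number of partitions of j whose set of parts is exactly S. -/

import Mathlib

open PowerSeries
namespace PartitionAux
noncomputable section
variable {α : Type*}
open Finset
open scoped Classical
open Finset.HasAntidiagonal
def indicatorSeries (α : Type*) [Semiring α] (s : Set ℕ) : PowerSeries α :=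
  PowerSeries.mk fun n => if n ∈ s then 1 else 0

theorem coeff_indicator (s : Set ℕ) [Semiring α] (n : ℕ) :
    coeff n (indicatorSeries α s) = if n ∈ s then 1 else 0 :=
  coeff_mk _ _

theorem coeff_indicator_pos (s : Set ℕ) [Semiring α] (n : ℕ) (h : n ∈ s) :
    coeff n (indicatorSeries α s) = 1 := by rw [coeff_indicator, if_pos h]

theorem coeff_indicator_neg (s : Set ℕ) [Semiring α] (n : ℕ) (h : n ∉ s) :
    coeff n (indicatorSeries α s) = 0 := by rw [coeff_indicator, if_neg h]

theorem constantCoeff_indicator (s : Set ℕ) [Semiring α] :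
    constantCoeff (indicatorSeries α s) = if 0 ∈ s then 1 else 0 :=
  rfl

-- The main workhorse of the partition theorem proof.
theorem partialGF_prop (α : Type*) [CommSemiring α] (n : ℕ) (s : Finset ℕ) (hs : ∀ i ∈ s, 0 < i)
    (c : ℕ → Set ℕ) (hc : ∀ i, i ∉ s → 0 ∈ c i) :
    #{p : n.Partition | (∀ j, p.parts.count j ∈ c j) ∧ ∀ j ∈ p.parts, j ∈ s} =
      coeff n (∏ i ∈ s, indicatorSeries α ((· * i) '' c i)) := by
  simp_rw [coeff_prod, coeff_indicator, prod_boole, sum_boole]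
  apply congr_arg
  simp only [mem_univ, forall_true_left, not_and, not_forall, exists_prop,
    Set.mem_image, not_exists]
  set φ : (a : Nat.Partition n) →
    a ∈ filter (fun p ↦ (∀ (j : ℕ), Multiset.count j p.parts ∈ c j) ∧ ∀ j ∈ p.parts, j ∈ s) univ →
    ℕ →₀ ℕ := fun p _ => {
      toFun := fun i => Multiset.count i p.parts • i
      support := Finset.filter (fun i => i ≠ 0) p.parts.toFinset
      mem_support_toFun := fun a => by
        simp only [smul_eq_mul, ne_eq, mul_eq_zero, Multiset.count_eq_zero]
        rw [not_or, not_not]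
        simp only [Multiset.mem_toFinset, not_not, mem_filter] }
  refine Finset.card_bij φ ?_ ?_ ?_
  · intro a ha
    simp only [φ, not_forall, not_exists, not_and, exists_prop, mem_filter]
    rw [mem_finsuppAntidiag]
    dsimp only [ne_eq, smul_eq_mul, id_eq, eq_mpr_eq_cast, le_eq_subset, Finsupp.coe_mk]
    simp only [mem_univ, forall_true_left, not_and, not_forall, exists_prop,
      mem_filter, true_and] at ha
    refine ⟨⟨?_, fun i ↦ ?_⟩, fun i _ ↦ ⟨a.parts.count i, ha.1 i, rfl⟩⟩
    · conv_rhs => simp [← a.parts_sum]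
      rw [sum_multiset_count_of_subset _ s]
      · simp only [smul_eq_mul]
      · intro i
        simp only [Multiset.mem_toFinset, not_not, mem_filter]
        apply ha.2
    · simp only [ne_eq, Multiset.mem_toFinset, not_not, mem_filter, and_imp]
      exact fun hi _ ↦ ha.2 i hi
  · intro p₁ hp₁ p₂ hp₂ h
    apply Nat.Partition.ext
    simp only [true_and, mem_univ, mem_filter] at hp₁ hp₂
    ext i
    simp only [φ, ne_eq, Multiset.mem_toFinset, not_not, smul_eq_mul, Finsupp.mk.injEq] at h
    by_cases hi : i = 0
    · rw [hi]
      rw [Multiset.count_eq_zero_of_notMem]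
      · rw [Multiset.count_eq_zero_of_notMem]
        intro a; exact Nat.lt_irrefl 0 (hs 0 (hp₂.2 0 a))
      intro a; exact Nat.lt_irrefl 0 (hs 0 (hp₁.2 0 a))
    · rw [← mul_left_inj' hi]
      rw [funext_iff] at h
      exact h.2 i
  · simp only [φ, mem_filter, mem_finsuppAntidiag, mem_univ, exists_prop, true_and, and_assoc]
    rintro f ⟨hf, hf₃, hf₄⟩
    have hf' : f ∈ finsuppAntidiag s n := mem_finsuppAntidiag.mpr ⟨hf, hf₃⟩
    simp only [mem_finsuppAntidiag] at hf'
    refine ⟨⟨∑ i ∈ s, Multiset.replicate (f i / i) i, ?_, ?_⟩, ?_, ?_, ?_⟩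
    · intro i hi
      simp only [exists_prop, Multiset.mem_sum, mem_map, Function.Embedding.coeFn_mk] at hi
      rcases hi with ⟨t, ht, z⟩
      apply hs
      rwa [Multiset.eq_of_mem_replicate z]
    · simp_rw [Multiset.sum_sum, Multiset.sum_replicate, Nat.nsmul_eq_mul]
      rw [← hf'.1]
      refine sum_congr rfl fun i hi => Nat.div_mul_cancel ?_
      rcases hf₄ i hi with ⟨w, _, hw₂⟩
      rw [← hw₂]
      exact dvd_mul_left _ _
    · intro i
      simp_rw [Multiset.count_sum', Multiset.count_replicate, sum_ite_eq']
      split_ifs with h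
      · rcases hf₄ i h with ⟨w, hw₁, hw₂⟩
        rwa [← hw₂, Nat.mul_div_cancel _ (hs i h)]
      · exact hc _ h
    · intro i hi
      rw [Multiset.mem_sum] at hi
      rcases hi with ⟨j, hj₁, hj₂⟩
      rwa [Multiset.eq_of_mem_replicate hj₂]
    · ext i
      simp_rw [Multiset.count_sum', Multiset.count_replicate, sum_ite_eq']
      simp only [ne_eq, Multiset.mem_toFinset, not_not, smul_eq_mul, ite_mul,
        zero_mul, Finsupp.coe_mk]
      split_ifs with h
      · apply Nat.div_mul_cancel
        rcases hf₄ i h with ⟨w, _, hw₂⟩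
        apply Dvd.intro_left _ hw₂
      · apply symm
        rw [← Finsupp.notMem_support_iff]
        exact notMem_mono hf'.2 h
end
end PartitionAux
/-- `rCount k S` is the number of partitions of `k` whose set of parts is exactly `S`. -/
noncomputable def rCount (k : ℕ) (S : Finset ℕ) : ℕ :=
  Nat.card {P : Nat.Partition k // P.parts.toFinset = S}

namespace RCountProof
open PowerSeries Finset PartitionAux
open scoped Classical
noncomputable section

def G (s : ℕ) : PowerSeries ℤ := indicatorSeries ℤ ((· * s) '' {k | 0 < k})

lemma mem_img {s n : ℕ} (hs : 0 < s) : n ∈ (· * s) '' {k | 0 < k} ↔ s ∣ n ∧ n ≠ 0 := by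
  constructor
  · rintro ⟨k, hk, rfl⟩
    simp only [Set.mem_setOf_eq] at hk
    exact ⟨Dvd.intro_left k rfl, by positivity⟩
  · rintro ⟨⟨k, rfl⟩, h⟩
    refine ⟨k, ?_, mul_comm k s⟩
    exact Nat.pos_of_ne_zero (by rintro rfl; simp at h)

lemma coeff_G {s : ℕ} (hs : 0 < s) (n : ℕ) :
    coeff n (G s) = if s ∣ n ∧ n ≠ 0 then 1 else 0 := by
  rw [G, coeff_indicator]
  simp [mem_img hs]

lemma one_sub_mul_G {s : ℕ} (hs : 0 < s) :
    (1 - X ^ s) * G s = (X : PowerSeries ℤ) ^ s := by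
  ext n
  rw [sub_mul, one_mul, map_sub, coeff_X_pow]
  rcases le_or_gt s n with h | h
  · obtain ⟨k, rfl⟩ := Nat.exists_eq_add_of_le h
    rw [add_comm s k, coeff_X_pow_mul, coeff_G hs, coeff_G hs]
    have h1 : s ∣ k + s ↔ s ∣ k := Nat.dvd_add_self_right
    rcases eq_or_ne k 0 with rfl | hk
    · simp [hs.ne']
    · have e1 : (s ∣ k + s ∧ k + s ≠ 0) = (s ∣ k ∧ k ≠ 0) := by
        rw [h1]; simp [hk, show k + s ≠ 0 by omega]
      simp only [e1, sub_self]
      rw [if_neg (by omega)]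
  · have h1 : coeff n (G s) = 0 := by
      rw [coeff_G hs]
      have : ¬ (s ∣ n ∧ n ≠ 0) := by
        rintro ⟨hd, hn⟩; exact absurd (Nat.le_of_dvd (by omega) hd) (by omega)
      simp [this]
    have h2 : coeff n ((X : PowerSeries ℤ) ^ s * G s) = 0 := by
      rw [coeff_mul]
      apply Finset.sum_eq_zero
      rintro ⟨a, b⟩ hab
      rw [Finset.HasAntidiagonal.mem_antidiagonal] at hab
      rw [coeff_X_pow, if_neg (by omega), zero_mul]
    rw [h1, h2, if_neg (by omega)]
    ring

end
end RCountProof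
namespace RCountProof
open PowerSeries Finset PartitionAux
open scoped Classical
noncomputable section

lemma coeff_prod_G (S : Finset ℕ) (hs : ∀ i ∈ S, 0 < i) (j : ℕ) :
    ((rCount j S : ℤ)) = coeff j (∏ s ∈ S, G s) := by
  classical
  have key := PartitionAux.partialGF_prop ℤ j S hs
      (fun i => if i ∈ S then {k | 0 < k} else Set.univ)
      (fun i hi => by simp [hi])
  have hprod : (∏ i ∈ S, indicatorSeries ℤ
        ((· * i) '' (if i ∈ S then {k | (0:ℕ) < k} else Set.univ)))
      = ∏ s ∈ S, G s := by
    apply Finset.prod_congr rfl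
    intro i hi
    rw [if_pos hi]
    rfl
  rw [hprod] at key
  rw [← key]
  norm_cast
  rw [rCount, Nat.card_eq_fintype_card, Fintype.card_subtype]
  congr 1
  apply Finset.filter_congr
  intro p _
  constructor
  · rintro rfl
    refine ⟨fun i => ?_, fun t ht => Multiset.mem_toFinset.mpr ht⟩
    split_ifs with h
    · exact Multiset.count_pos.mpr (Multiset.mem_toFinset.mp h)
    · trivial
  · rintro ⟨h1, h2⟩
    ext x
    rw [Multiset.mem_toFinset]
    constructor
    · exact h2 x
    · intro hx
      have := h1 x
      rw [if_pos hx] at this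
      exact Multiset.count_pos.mp this

lemma sum_aux (N : ℕ) (f g : ℕ → ℤ) :
    ∑ k ∈ Finset.range N, ∑ p ∈ Finset.HasAntidiagonal.antidiagonal k, f p.1 * g p.2
      = ∑ j ∈ Finset.range N, (∑ i ∈ Finset.range (N - j), f i) * g j := by
  simp_rw [Finset.sum_mul]
  rw [Finset.sum_sigma', Finset.sum_sigma']
  refine Finset.sum_nbij' (i := fun x => ⟨x.2.2, x.2.1⟩)
    (j := fun x => ⟨x.2 + x.1, (x.2, x.1)⟩) ?_ ?_ ?_ ?_ ?_
  · rintro ⟨k, a, b⟩ h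
    simp only [Finset.mem_sigma, Finset.mem_range, Finset.HasAntidiagonal.mem_antidiagonal] at h ⊢
    omega
  · rintro ⟨j, i⟩ h
    simp only [Finset.mem_sigma, Finset.mem_range, Finset.HasAntidiagonal.mem_antidiagonal] at h ⊢
    exact ⟨by omega, trivial⟩
  · rintro ⟨k, a, b⟩ h
    simp only [Finset.mem_sigma, Finset.mem_range, Finset.HasAntidiagonal.mem_antidiagonal] at h
    obtain ⟨-, h2⟩ := h
    subst h2
    rfl
  · rintro ⟨j, i⟩ h
    rfl
  · rintro ⟨k, a, b⟩ h
    rfl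

end
end RCountProof
namespace RCountProof
open PowerSeries Finset PartitionAux
open scoped Classical
noncomputable section

lemma constantCoeff_G {s : ℕ} (hs : 0 < s) : constantCoeff (G s) = 0 := by
  rw [← coeff_zero_eq_constantCoeff, coeff_G hs]
  simp

lemma gauss (m : ℕ) : m * (m + 1) / 2 = ∑ t ∈ Finset.Icc 1 m, t := by
  have h : Finset.range (m + 1) = insert 0 (Finset.Icc 1 m) := by
    ext x; simp; omega
  have h2 := Finset.sum_range_id_mul_two (m + 1)
  rw [h, Finset.sum_insert (by simp), Nat.add_sub_cancel] at h2
  rw [mul_comm m (m + 1), ← h2]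
  omega

lemma coe_prod_one_sub (F : Finset ℕ) :
    ((∏ t ∈ F, (1 - Polynomial.X ^ t) : Polynomial ℤ) : PowerSeries ℤ)
      = ∏ t ∈ F, (1 - (PowerSeries.X : PowerSeries ℤ) ^ t) := by
  rw [← Polynomial.coeToPowerSeries.ringHom_apply, map_prod]
  apply Finset.prod_congr rfl
  intro t _
  rw [map_sub, map_one, map_pow, Polynomial.coeToPowerSeries.ringHom_apply, Polynomial.coe_X]

end
end RCountProof
/-- Fix `m`, let `n = m(m+1)/2`, let `c_i` be the coefficients of
`∏_{i=1}^m (1 - Xⁱ)` and set `d_j = ∑_{i=0}^{n-j} c_i`. For every non-empty subset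
`S ⊆ {1,...,m}`: `∑_{j=1}^n d_j r(j,S)` equals `1` if `S = {1,...,m}` and `0` otherwise. -/
theorem rCount_d_sum (m : ℕ) (S : Finset ℕ) (hS : S.Nonempty)
    (hSm : S ⊆ Finset.Icc 1 m) :
    (∑ j ∈ Finset.Icc 1 (m * (m + 1) / 2),
        (∑ i ∈ Finset.range (m * (m + 1) / 2 - j + 1),
            (∏ t ∈ Finset.Icc 1 m, (1 - Polynomial.X ^ t : Polynomial ℤ)).coeff i) *
          (rCount j S : ℤ)) =
      if S = Finset.Icc 1 m then 1 else 0 := by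
  classical
  obtain ⟨s₀, hs₀⟩ := hS
  have hs0 : ∀ i ∈ S, 0 < i := fun i hi => (Finset.mem_Icc.mp (hSm hi)).1
  set n := m * (m + 1) / 2 with hn
  set Δp : Polynomial ℤ := ∏ t ∈ Finset.Icc 1 m, (1 - Polynomial.X ^ t) with hΔp
  set R : PowerSeries ℤ := ∏ s ∈ S, RCountProof.G s with hR
  set Q : Polynomial ℤ :=
    (∏ t ∈ Finset.Icc 1 m \ S, (1 - Polynomial.X ^ t)) *
      Polynomial.X ^ (∑ s ∈ S, s) with hQ
  have hrc : ∀ j, (rCount j S : ℤ) = PowerSeries.coeff j R :=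
    fun j => RCountProof.coeff_prod_G S hs0 j
  have hr0 : ((rCount 0 S : ℤ)) = 0 := by
    rw [hrc 0, hR, PowerSeries.coeff_zero_eq_constantCoeff, map_prod]
    exact Finset.prod_eq_zero hs₀ (RCountProof.constantCoeff_G (hs0 _ hs₀))
  have key : (Δp : PowerSeries ℤ) * R = (Q : PowerSeries ℤ) := by
    rw [hΔp, RCountProof.coe_prod_one_sub, ← Finset.prod_sdiff hSm, mul_assoc, hR,
      ← Finset.prod_mul_distrib]
    have h1 : ∏ s ∈ S, ((1 - (PowerSeries.X : PowerSeries ℤ) ^ s) * RCountProof.G s)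
        = ∏ s ∈ S, (PowerSeries.X : PowerSeries ℤ) ^ s :=
      Finset.prod_congr rfl fun s hsmem => RCountProof.one_sub_mul_G (hs0 s hsmem)
    rw [h1, Finset.prod_pow_eq_pow_sum, hQ, Polynomial.coe_mul,
      RCountProof.coe_prod_one_sub, Polynomial.coe_pow, Polynomial.coe_X]
  have hdeg : Q.natDegree < n + 1 := by
    have h1 : (∏ t ∈ Finset.Icc 1 m \ S, (1 - Polynomial.X ^ t : Polynomial ℤ)).natDegree
        ≤ ∑ t ∈ Finset.Icc 1 m \ S, t := by
      refine le_trans (Polynomial.natDegree_prod_le _ _) (Finset.sum_le_sum fun t _ => ?_)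
      refine le_trans (Polynomial.natDegree_sub_le _ _) ?_
      simp [Polynomial.natDegree_X_pow]
    have h2 : Q.natDegree ≤ ∑ t ∈ Finset.Icc 1 m \ S, t + ∑ s ∈ S, s := by
      refine le_trans Polynomial.natDegree_mul_le ?_
      exact add_le_add h1 (le_of_eq (Polynomial.natDegree_X_pow _))
    rw [Finset.sum_sdiff hSm] at h2
    have := RCountProof.gauss m
    omega
  have hsumQ : ∑ k ∈ Finset.range (n + 1), Q.coeff k = Q.eval 1 := by
    rw [Polynomial.eval_eq_sum_range' hdeg]
    simp
  have hev : Q.eval 1 = if S = Finset.Icc 1 m then 1 else 0 := by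
    by_cases hSe : S = Finset.Icc 1 m
    · rw [if_pos hSe, hQ, hSe]
      simp
    · rw [if_neg hSe, hQ]
      have hne : (Finset.Icc 1 m \ S).Nonempty := by
        rw [Finset.sdiff_nonempty]
        intro hsub
        exact hSe (Finset.Subset.antisymm hSm hsub)
      obtain ⟨t, ht⟩ := hne
      rw [Polynomial.eval_mul, Polynomial.eval_prod,
        Finset.prod_eq_zero ht (by simp), zero_mul]
  have hcoeffmul : ∀ k, PowerSeries.coeff k ((Δp : PowerSeries ℤ) * R)
      = ∑ p ∈ Finset.HasAntidiagonal.antidiagonal k, Δp.coeff p.1 * (rCount p.2 S : ℤ) := by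
    intro k
    rw [PowerSeries.coeff_mul]
    refine Finset.sum_congr rfl ?_
    rintro ⟨a, b⟩ _
    rw [Polynomial.coeff_coe, ← hrc]
  calc
    ∑ j ∈ Finset.Icc 1 n, (∑ i ∈ Finset.range (n - j + 1), Δp.coeff i) * (rCount j S : ℤ)
        = ∑ j ∈ Finset.range (n + 1),
            (∑ i ∈ Finset.range (n + 1 - j), Δp.coeff i) * (rCount j S : ℤ) := by
          have hins : Finset.range (n + 1) = insert 0 (Finset.Icc 1 n) := by
            ext x; simp; omega
          rw [hins, Finset.sum_insert (by simp), hr0, mul_zero, zero_add]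
          refine Finset.sum_congr rfl fun j hj => ?_
          rw [Finset.mem_Icc] at hj
          rw [show n + 1 - j = n - j + 1 by omega]
    _ = ∑ k ∈ Finset.range (n + 1),
          ∑ p ∈ Finset.HasAntidiagonal.antidiagonal k, Δp.coeff p.1 * (rCount p.2 S : ℤ) :=
        (RCountProof.sum_aux (n + 1) (fun i => Δp.coeff i) (fun j => (rCount j S : ℤ))).symm
    _ = ∑ k ∈ Finset.range (n + 1), PowerSeries.coeff k ((Δp : PowerSeries ℤ) * R) := by
          refine Finset.sum_congr rfl fun k _ => (hcoeffmul k).symm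
    _ = ∑ k ∈ Finset.range (n + 1), Q.coeff k := by
          rw [key]
          exact Finset.sum_congr rfl fun k _ => Polynomial.coeff_coe _ _
    _ = Q.eval 1 := hsumQ
    _ = if S = Finset.Icc 1 m then 1 else 0 := hev
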